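/- Let k be a finite field with q elements. Let C be a commutative k-algebra that is smooth over k, let B be a commutative C-algebra that is étale over C, and let D be an arbitrary commutative k-algebra. Let f : C → B ⊗_k D be a k-algebra homomorphism, and let I ⊆ B ⊗_k D be the ideal generated by the elements f(c)^q − (ι(c) ⊗ 1) for all c ∈ C, where ι : C → B is the structure homomorphism. Then the quotient algebra (B ⊗_k D)/I, regarded as a D-algebra via d ↦ 1 ⊗ d, is étale over D. -/

import Mathlib

open scoped TensorProduct

set_option maxHeartbeats 1000000

lemma ff_exists_char {k : Type*} [Field k] [Fintype k] {Q : Type*} [CommRing Q] [Nontrivial Q]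
    (g : k →+* Q) : ∃ p n : ℕ, p.Prime ∧ CharP Q p ∧ n ≠ 0 ∧ Fintype.card k = p ^ n := by
  have hp : (ringChar k).Prime := CharP.char_is_prime k (ringChar k)
  obtain ⟨n, -, hcard⟩ := FiniteField.card k (ringChar k)
  exact ⟨ringChar k, n, hp, charP_of_injective_ringHom g.injective _, n.pos.ne', hcard⟩

lemma ff_pow_eq_of_mk_eq {k : Type*} [Field k] [Fintype k] {Q : Type*} [CommRing Q]
    (g : k →+* Q) {J : Ideal Q} (hJ : J ^ 2 = ⊥) {u v : Q}
    (h : Ideal.Quotient.mk J u = Ideal.Quotient.mk J v) :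
    u ^ Fintype.card k = v ^ Fintype.card k := by
  rcases subsingleton_or_nontrivial Q with hs | hn
  · exact congrArg (· ^ Fintype.card k) (Subsingleton.elim u v)
  obtain ⟨p, n, hp, hcp, hn0, hcard⟩ := ff_exists_char g
  haveI := Fact.mk hp
  haveI := hcp
  have hm : u - v ∈ J := Ideal.Quotient.eq.mp h
  have hj : (u - v) * (u - v) = 0 := by
    have h2 : (u - v) * (u - v) ∈ J ^ 2 := by
      rw [pow_two]; exact Ideal.mul_mem_mul hm hm
    rw [hJ] at h2
    exact Ideal.mem_bot.mp h2
  have h2 : 2 ≤ p ^ n := by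
    calc 2 ≤ p := hp.two_le
    _ ≤ p ^ n := Nat.le_self_pow hn0 p
  have hz : (u - v) ^ p ^ n = 0 := by
    rw [show p ^ n = 2 + (p ^ n - 2) by omega, pow_add, pow_two, hj, zero_mul]
  rw [hcard]
  calc u ^ p ^ n = (v + (u - v)) ^ p ^ n := by ring_nf
  _ = v ^ p ^ n + (u - v) ^ p ^ n := add_pow_char_pow v (u - v) p n
  _ = v ^ p ^ n := by rw [hz, add_zero]

lemma ff_add_pow {k : Type*} [Field k] [Fintype k] {Q : Type*} [CommRing Q]
    (g : k →+* Q) (x y : Q) :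
    (x + y) ^ Fintype.card k = x ^ Fintype.card k + y ^ Fintype.card k := by
  rcases subsingleton_or_nontrivial Q with hs | hn
  · exact Subsingleton.elim _ _
  obtain ⟨p, n, hp, hcp, hn0, hcard⟩ := ff_exists_char g
  haveI := Fact.mk hp
  haveI := hcp
  rw [hcard]
  exact add_pow_char_pow x y p n

universe u

/-- Let `k` be a finite field with `q` elements, `C` a smooth commutative
`k`-algebra, `B` a commutative `C`-algebra étale over `C`, and `D` an arbitrary commutative
`k`-algebra. Let `f : C → B ⊗[k] D` be a `k`-algebra homomorphism and let
`I ⊆ B ⊗[k] D` be the ideal generated by the elements `f(c)^q - ι(c) ⊗ 1` for `c ∈ C`,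
where `ι : C → B` is the structure homomorphism. Then `(B ⊗[k] D)/I`, regarded as a
`D`-algebra via `d ↦ 1 ⊗ d`, is étale over `D`. -/
theorem stmt1 (k C B D : Type u) [Field k] [Fintype k] (q : ℕ) (hq : Fintype.card k = q)
    [CommRing C] [Algebra k C] [Algebra.Smooth k C]
    [CommRing B] [Algebra k B] [Algebra C B] [IsScalarTower k C B] [Algebra.Etale C B]
    [CommRing D] [Algebra k D]
    (f : C →ₐ[k] B ⊗[k] D)
    (I : Ideal (B ⊗[k] D))
    (hI : I = Ideal.span
      {x : B ⊗[k] D | ∃ c : C, x = f c ^ q - (algebraMap C B c) ⊗ₜ[k] (1 : D)}) :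
    letI : Algebra D ((B ⊗[k] D) ⧸ I) :=
      ((Ideal.Quotient.mkₐ k I).comp (Algebra.TensorProduct.includeRight)).toRingHom.toAlgebra
    Algebra.Etale D ((B ⊗[k] D) ⧸ I) := by
  subst hq
  letI instDA : Algebra D (B ⊗[k] D) := Algebra.TensorProduct.rightAlgebra
  show @Algebra.Etale D ((B ⊗[k] D) ⧸ I) _ _
    (((Ideal.Quotient.mkₐ k I).comp (Algebra.TensorProduct.includeRight)).toRingHom.toAlgebra)
  have halg : (((Ideal.Quotient.mkₐ k I).comp
        (Algebra.TensorProduct.includeRight)).toRingHom.toAlgebra : Algebra D ((B ⊗[k] D) ⧸ I))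
      = Ideal.Quotient.algebra D :=
    Algebra.algebra_ext _ _ fun d => rfl
  rw [halg]
  have gen_mem : ∀ c : C,
      f c ^ Fintype.card k - (algebraMap C B c) ⊗ₜ[k] (1 : D) ∈ I := by
    intro c; rw [hI]; exact Ideal.subset_span ⟨c, rfl⟩
  -- Finite generation of I
  have hFG : I.FG := by
    obtain ⟨s, hs⟩ := (inferInstance : Algebra.FiniteType k C).out
    have key : ∀ c : C, f c ^ Fintype.card k - (algebraMap C B c) ⊗ₜ[k] (1 : D) ∈
        Ideal.span ((fun c : C => f c ^ Fintype.card k - (algebraMap C B c) ⊗ₜ[k] (1 : D)) '' ↑s) := by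
      set Sp := Ideal.span ((fun c : C =>
        f c ^ Fintype.card k - (algebraMap C B c) ⊗ₜ[k] (1 : D)) '' ↑s) with hSp
      intro c
      have hc : c ∈ Algebra.adjoin k (↑s : Set C) := hs ▸ Algebra.mem_top
      induction hc using Algebra.adjoin_induction with
      | mem x hx => exact Ideal.subset_span ⟨x, hx, rfl⟩
      | algebraMap a =>
        have h1 : f (algebraMap k C a) = algebraMap k (B ⊗[k] D) a := f.commutes a
        have h2 : (algebraMap C B (algebraMap k C a)) ⊗ₜ[k] (1 : D)
            = algebraMap k (B ⊗[k] D) a := by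
          rw [← IsScalarTower.algebraMap_apply, Algebra.TensorProduct.algebraMap_apply]
        rw [h1, h2, ← map_pow, FiniteField.pow_card, sub_self]
        exact Ideal.zero_mem _
      | add x y hx hy ihx ihy =>
        have hexp : f (x + y) ^ Fintype.card k - (algebraMap C B (x + y)) ⊗ₜ[k] (1 : D)
            = (f x ^ Fintype.card k - (algebraMap C B x) ⊗ₜ[k] (1 : D))
              + (f y ^ Fintype.card k - (algebraMap C B y) ⊗ₜ[k] (1 : D)) := by
          rw [map_add, map_add, ff_add_pow (algebraMap k (B ⊗[k] D)),
            TensorProduct.add_tmul]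
          ring
        rw [hexp]
        exact Ideal.add_mem _ ihx ihy
      | mul x y hx hy ihx ihy =>
        have hexp : f (x * y) ^ Fintype.card k - (algebraMap C B (x * y)) ⊗ₜ[k] (1 : D)
            = f x ^ Fintype.card k *
                (f y ^ Fintype.card k - (algebraMap C B y) ⊗ₜ[k] (1 : D))
              + ((algebraMap C B y) ⊗ₜ[k] (1 : D)) *
                (f x ^ Fintype.card k - (algebraMap C B x) ⊗ₜ[k] (1 : D)) := by
          rw [map_mul, map_mul, mul_pow,
            show (algebraMap C B x * algebraMap C B y) ⊗ₜ[k] (1 : D)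
              = ((algebraMap C B x) ⊗ₜ[k] (1 : D)) * ((algebraMap C B y) ⊗ₜ[k] (1 : D)) by
                rw [Algebra.TensorProduct.tmul_mul_tmul, mul_one]]
          ring
        rw [hexp]
        exact Ideal.add_mem _ (Ideal.mul_mem_left _ _ ihy) (Ideal.mul_mem_left _ _ ihx)
    have hIeq : I = Ideal.span ((fun c : C =>
        f c ^ Fintype.card k - (algebraMap C B c) ⊗ₜ[k] (1 : D)) '' ↑s) := by
      apply le_antisymm
      · rw [hI, Ideal.span_le]
        rintro x ⟨c, rfl⟩
        exact key c
      · rw [Ideal.span_le]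
        rintro x ⟨c, hc, rfl⟩
        exact gen_mem c
    rw [hIeq]
    exact Submodule.fg_span (Set.Finite.image _ s.finite_toSet)
  have hmkI : ∀ c : C, Ideal.Quotient.mk I (f c ^ Fintype.card k)
      = Ideal.Quotient.mk I ((algebraMap C B c) ⊗ₜ[k] (1 : D)) :=
    fun c => Ideal.Quotient.eq.mpr (gen_mem c)
  -- finite presentation
  haveI hfpB : Algebra.FinitePresentation k B :=
    Algebra.FinitePresentation.trans (R := k) (A := C) (B := B)
  let e : (D ⊗[k] B) ≃ₐ[D] (B ⊗[k] D) := AlgEquiv.ofRingEquiv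
    (f := (Algebra.TensorProduct.comm k D B).toRingEquiv) (fun d => by
      show Algebra.TensorProduct.comm k D B (algebraMap D (D ⊗[k] B) d) = _
      rw [Algebra.TensorProduct.algebraMap_apply, Algebra.TensorProduct.comm_tmul]
      rfl)
  haveI : Algebra.FinitePresentation D (B ⊗[k] D) := Algebra.FinitePresentation.equiv e
  haveI hfp : Algebra.FinitePresentation D ((B ⊗[k] D) ⧸ I) :=
    Algebra.FinitePresentation.quotient hFG
  -- formal etaleness
  have fe : Algebra.FormallyEtale D ((B ⊗[k] D) ⧸ I) := by
    refine Algebra.FormallyEtale.iff_comp_bijective.mpr ?_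
    intro Q _ _ J hJ
    let gk : k →+* Q := (algebraMap D Q).comp (algebraMap k D)
    have setup : ∀ ᾱ : (B ⊗[k] D) →ₐ[D] (Q ⧸ J), ∃ ψ : C →+* Q,
        (∀ (u : Q) (c : C), Ideal.Quotient.mk J u = ᾱ (f c) → u ^ Fintype.card k = ψ c) ∧
        ψ.comp (algebraMap k C) = gk := by
      intro ᾱ
      let sec : Q ⧸ J → Q := Function.surjInv Ideal.Quotient.mk_surjective
      have hsec : ∀ x, Ideal.Quotient.mk J (sec x) = x :=
        fun x => Function.surjInv_eq Ideal.Quotient.mk_surjective x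
      let ψ0 : C → Q := fun c => sec (ᾱ (f c)) ^ Fintype.card k
      have hψ : ∀ (u : Q) (c : C), Ideal.Quotient.mk J u = ᾱ (f c) →
          u ^ Fintype.card k = ψ0 c :=
        fun u c h => ff_pow_eq_of_mk_eq gk hJ (by rw [h, hsec])
      have hq0 : Fintype.card k ≠ 0 := Fintype.card_ne_zero
      refine ⟨{ toFun := ψ0,
                map_one' := ?_, map_mul' := ?_, map_zero' := ?_, map_add' := ?_ }, hψ, ?_⟩
      · have h := hψ 1 1 (by simp)
        rw [one_pow] at h; exact h.symm
      · intro c c'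
        have h := hψ (sec (ᾱ (f c)) * sec (ᾱ (f c'))) (c * c')
          (by rw [map_mul, hsec, hsec, ← map_mul, ← map_mul])
        rw [mul_pow] at h
        exact h.symm
      · have h := hψ 0 0 (by simp)
        rw [zero_pow hq0] at h; exact h.symm
      · intro c c'
        have h := hψ (sec (ᾱ (f c)) + sec (ᾱ (f c'))) (c + c')
          (by rw [map_add, hsec, hsec, ← map_add, ← map_add])
        rw [ff_add_pow gk] at h
        exact h.symm
      · ext a
        have hmk : Ideal.Quotient.mk J (gk a) = ᾱ (f (algebraMap k C a)) := by
          have h1 : f (algebraMap k C a) = algebraMap D (B ⊗[k] D) (algebraMap k D a) := by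
            rw [f.commutes]
            show algebraMap k (B ⊗[k] D) a = (1 : B) ⊗ₜ[k] (algebraMap k D a)
            rw [Algebra.TensorProduct.algebraMap_apply, Algebra.algebraMap_eq_smul_one,
              Algebra.algebraMap_eq_smul_one (A := D), TensorProduct.smul_tmul]
          rw [h1, ᾱ.commutes]
          rfl
        have h := hψ (gk a) (algebraMap k C a) hmk
        show ψ0 (algebraMap k C a) = gk a
        rw [← h, ← map_pow, FiniteField.pow_card]
    constructor
    · -- injectivity
      intro g₁ g₂ hg
      let a₁ : (B ⊗[k] D) →ₐ[D] Q := g₁.comp (Ideal.Quotient.mkₐ D I)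
      let a₂ : (B ⊗[k] D) →ₐ[D] Q := g₂.comp (Ideal.Quotient.mkₐ D I)
      let ᾱ : (B ⊗[k] D) →ₐ[D] (Q ⧸ J) := (Ideal.Quotient.mkₐ D J).comp a₁
      obtain ⟨ψ, hψ, hcompat⟩ := setup ᾱ
      have hmk1 : ∀ x, Ideal.Quotient.mk J (a₁ x) = ᾱ x := fun x => rfl
      have hmk2 : ∀ x, Ideal.Quotient.mk J (a₂ x) = ᾱ x := by
        intro x
        exact (AlgHom.congr_fun hg (Ideal.Quotient.mk I x)).symm
      letI instCQ : Algebra C Q := ψ.toAlgebra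
      have hci1 : ∀ c : C, a₁ ((algebraMap C B c) ⊗ₜ[k] (1 : D)) = ψ c := by
        intro c
        calc a₁ ((algebraMap C B c) ⊗ₜ[k] (1 : D))
            = g₁ (Ideal.Quotient.mk I ((algebraMap C B c) ⊗ₜ[k] (1 : D))) := rfl
        _ = g₁ (Ideal.Quotient.mk I (f c ^ Fintype.card k)) := by rw [hmkI]
        _ = g₁ (Ideal.Quotient.mk I (f c)) ^ Fintype.card k := by rw [map_pow, map_pow]
        _ = a₁ (f c) ^ Fintype.card k := rfl
        _ = ψ c := hψ _ c (hmk1 (f c))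
      have hci2 : ∀ c : C, a₂ ((algebraMap C B c) ⊗ₜ[k] (1 : D)) = ψ c := by
        intro c
        calc a₂ ((algebraMap C B c) ⊗ₜ[k] (1 : D))
            = g₂ (Ideal.Quotient.mk I ((algebraMap C B c) ⊗ₜ[k] (1 : D))) := rfl
        _ = g₂ (Ideal.Quotient.mk I (f c ^ Fintype.card k)) := by rw [hmkI]
        _ = g₂ (Ideal.Quotient.mk I (f c)) ^ Fintype.card k := by rw [map_pow, map_pow]
        _ = a₂ (f c) ^ Fintype.card k := rfl
        _ = ψ c := hψ _ c (hmk2 (f c))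
      let β₁ : B →ₐ[C] Q :=
        { toRingHom := (a₁ : (B ⊗[k] D) →+* Q).comp Algebra.TensorProduct.includeLeftRingHom
          commutes' := fun c => hci1 c }
      let β₂ : B →ₐ[C] Q :=
        { toRingHom := (a₂ : (B ⊗[k] D) →+* Q).comp Algebra.TensorProduct.includeLeftRingHom
          commutes' := fun c => hci2 c }
      have hβe : β₁ = β₂ := (Algebra.FormallyEtale.comp_bijective (R := C) (A := B) J hJ).1 (by
        apply AlgHom.ext; intro b
        show Ideal.Quotient.mk J (a₁ (b ⊗ₜ[k] (1 : D)))
          = Ideal.Quotient.mk J (a₂ (b ⊗ₜ[k] (1 : D)))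
        rw [hmk1, hmk2])
      apply AlgHom.ext; intro x
      obtain ⟨a, rfl⟩ := Ideal.Quotient.mk_surjective x
      show a₁ a = a₂ a
      induction a using TensorProduct.induction_on with
      | zero => rw [map_zero, map_zero]
      | tmul b d =>
        have e1 : ∀ (a : (B ⊗[k] D) →ₐ[D] Q),
            a (b ⊗ₜ[k] d) = a (b ⊗ₜ[k] (1 : D)) * algebraMap D Q d := by
          intro a
          rw [show (b ⊗ₜ[k] d : B ⊗[k] D) = (b ⊗ₜ[k] (1 : D)) * ((1 : B) ⊗ₜ[k] d) by
            rw [Algebra.TensorProduct.tmul_mul_tmul, mul_one, one_mul], map_mul]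
          congr 1
          exact a.commutes d
        rw [e1 a₁, e1 a₂]
        congr 1
        exact AlgHom.congr_fun hβe b
      | add x y ihx ihy => rw [map_add, map_add, ihx, ihy]
    · -- surjectivity
      intro gbar
      let ᾱ : (B ⊗[k] D) →ₐ[D] (Q ⧸ J) := gbar.comp (Ideal.Quotient.mkₐ D I)
      obtain ⟨ψ, hψ, hcompat⟩ := setup ᾱ
      letI instkQ : Algebra k Q := gk.toAlgebra
      letI instCQ : Algebra C Q := ψ.toAlgebra
      haveI istCQ : IsScalarTower k C Q := IsScalarTower.of_algebraMap_eq' (by exact hcompat.symm)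
      haveI istDQ : IsScalarTower k D Q := IsScalarTower.of_algebraMap_eq' rfl
      have hbar : ∀ c : C, ᾱ ((algebraMap C B c) ⊗ₜ[k] (1 : D)) = algebraMap C (Q ⧸ J) c := by
        intro c
        obtain ⟨u, hu⟩ := Ideal.Quotient.mk_surjective (ᾱ (f c))
        have h1 : u ^ Fintype.card k = ψ c := hψ u c hu
        calc ᾱ ((algebraMap C B c) ⊗ₜ[k] (1 : D))
            = gbar (Ideal.Quotient.mk I ((algebraMap C B c) ⊗ₜ[k] (1 : D))) := rfl
        _ = gbar (Ideal.Quotient.mk I (f c ^ Fintype.card k)) := by rw [hmkI]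
        _ = gbar (Ideal.Quotient.mk I (f c)) ^ Fintype.card k := by rw [map_pow, map_pow]
        _ = ᾱ (f c) ^ Fintype.card k := rfl
        _ = Ideal.Quotient.mk J u ^ Fintype.card k := by rw [hu]
        _ = Ideal.Quotient.mk J (u ^ Fintype.card k) := (map_pow _ _ _).symm
        _ = algebraMap C (Q ⧸ J) c := by rw [h1]; rfl
      let βb : B →ₐ[C] Q ⧸ J :=
        { toRingHom := (ᾱ : (B ⊗[k] D) →+* (Q ⧸ J)).comp Algebra.TensorProduct.includeLeftRingHom
          commutes' := fun c => hbar c }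
      obtain ⟨β, hβ⟩ := (Algebra.FormallyEtale.comp_bijective (R := C) (A := B) J hJ).2 βb
      have hβ' : ∀ b : B, Ideal.Quotient.mk J (β b) = ᾱ (b ⊗ₜ[k] (1 : D)) :=
        fun b => AlgHom.congr_fun hβ b
      let α0 : (B ⊗[k] D) →ₐ[k] Q :=
        Algebra.TensorProduct.productMap (β.restrictScalars k) (IsScalarTower.toAlgHom k D Q)
      let α : (B ⊗[k] D) →ₐ[D] Q :=
        { toRingHom := α0.toRingHom
          commutes' := fun d => by
            show α0 ((1 : B) ⊗ₜ[k] d) = algebraMap D Q d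
            rw [Algebra.TensorProduct.productMap_apply_tmul, map_one, one_mul]
            rfl }
      have hmkα : ∀ x : B ⊗[k] D, Ideal.Quotient.mk J (α x) = ᾱ x := by
        intro x
        induction x using TensorProduct.induction_on with
        | zero => rw [map_zero, map_zero, map_zero]
        | tmul b d =>
          have h1 : α (b ⊗ₜ[k] d) = β b * algebraMap D Q d := by
            show α0 _ = _
            rw [Algebra.TensorProduct.productMap_apply_tmul]
            rfl
          have h2 : ᾱ (b ⊗ₜ[k] d) = ᾱ (b ⊗ₜ[k] (1 : D)) * ᾱ ((1 : B) ⊗ₜ[k] d) := by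
            rw [← map_mul, Algebra.TensorProduct.tmul_mul_tmul, mul_one, one_mul]
          rw [h1, h2, map_mul, hβ']
          congr 1
          rw [show ((1 : B) ⊗ₜ[k] d : B ⊗[k] D) = algebraMap D (B ⊗[k] D) d from
            (Algebra.TensorProduct.includeRight_apply (A := B) d).symm, ᾱ.commutes d]
          rfl
        | add x y ihx ihy => rw [map_add, map_add, map_add, ihx, ihy]
      have hkillα : ∀ x ∈ I, α x = 0 := by
        have hsub : I ≤ RingHom.ker (α : (B ⊗[k] D) →+* Q) := by
          rw [hI, Ideal.span_le]
          rintro x ⟨c, rfl⟩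
          have h1 : α (f c) ^ Fintype.card k = ψ c := hψ _ c (hmkα (f c))
          have h2 : α ((algebraMap C B c) ⊗ₜ[k] (1 : D)) = ψ c := by
            show α0 _ = _
            rw [Algebra.TensorProduct.productMap_apply_tmul, map_one, mul_one]
            exact β.commutes c
          rw [SetLike.mem_coe, RingHom.mem_ker]
          show α _ = 0
          rw [map_sub, map_pow, h1, h2, sub_self]
        exact fun x hx => hsub hx
      refine ⟨Ideal.Quotient.liftₐ I α hkillα, ?_⟩
      apply AlgHom.ext; intro x
      obtain ⟨a, rfl⟩ := Ideal.Quotient.mk_surjective x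
      show Ideal.Quotient.mk J (Ideal.Quotient.liftₐ I α hkillα (Ideal.Quotient.mk I a)) = ᾱ a
      show Ideal.Quotient.mk J (α a) = ᾱ a
      exact hmkα a
  exact { formallyEtale := fe, finitePresentation := hfp }
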